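/- arXiv:2508.06431 — 4 statements merged into one kernel-verified Lean document; each statement's English description precedes it below -/
import Mathlib

section
/- For every t ∈ ℝ, the mean squared error of the kernel characteristic function estimator decomposes as squared bias plus variance: E[|φ̂_{nh}(t) − φ(t)|²] = |φ_K(th) − 1|²·|φ(t)|² + |φ_K(th)|²·(1 − |φ(t)|²)/n. -/
open MeasureTheory ProbabilityTheory Finset
open scoped ComplexConjugate

/-- The empirical characteristic function `φ̂_n(t) = (1/n)·Σ_j exp(i t X_j)`. -/
noncomputable def empCharFun {Ω : Type*} {n : ℕ} (X : Fin n → Ω → ℝ) (t : ℝ) (ω : Ω) : ℂ :=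
  (1 / (n : ℂ)) * ∑ j : Fin n, Complex.exp (Complex.I * (t : ℂ) * (X j ω : ℂ))

/-- The characteristic function `φ(t) = E[exp(i t Y)]` of a real random variable `Y`. -/
noncomputable def charFunRV {Ω : Type*} [MeasureSpace Ω] (Y : Ω → ℝ) (t : ℝ) : ℂ :=
  ∫ ω, Complex.exp (Complex.I * (t : ℂ) * (Y ω : ℂ)) ∂ℙ

/-- The characteristic function `φ_K(s) = ∫ K(z)·exp(i s z) dz` of a kernel `K`. -/
noncomputable def kernelCF (K : ℝ → ℝ) (s : ℝ) : ℂ :=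
  ∫ z : ℝ, ((K z : ℝ) : ℂ) * Complex.exp (Complex.I * (s : ℂ) * (z : ℂ))

lemma integrable_of_bdd {Ω E : Type*} [MeasureSpace Ω] [IsProbabilityMeasure (ℙ : Measure Ω)]
    [NormedAddCommGroup E] {f : Ω → E} (hf : AEStronglyMeasurable f ℙ) {C : ℝ}
    (hb : ∀ ω, ‖f ω‖ ≤ C) : Integrable f ℙ :=
  Integrable.mono' (integrable_const C) hf (Filter.Eventually.of_forall hb)

lemma indep_integral_mul_complex {Ω : Type*} [MeasureSpace Ω]
    [IsProbabilityMeasure (ℙ : Measure Ω)]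
    {f g : Ω → ℂ} (hfg : IndepFun f g ℙ) (hfm : Measurable f) (hgm : Measurable g)
    (hfb : ∀ ω, ‖f ω‖ ≤ 1) (hgb : ∀ ω, ‖g ω‖ ≤ 1) :
    ∫ ω, f ω * g ω ∂ℙ = (∫ ω, f ω ∂ℙ) * (∫ ω, g ω ∂ℙ) := by
  have hbre : ∀ (h : Ω → ℂ) (hb : ∀ ω, ‖h ω‖ ≤ 1) (ω : Ω), ‖(h ω).re‖ ≤ 1 := fun h hb ω =>
    le_trans (by simpa using Complex.abs_re_le_norm (h ω)) (hb ω)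
  have hbim : ∀ (h : Ω → ℂ) (hb : ∀ ω, ‖h ω‖ ≤ 1) (ω : Ω), ‖(h ω).im‖ ≤ 1 := fun h hb ω =>
    le_trans (by simpa using Complex.abs_im_le_norm (h ω)) (hb ω)
  have hfrm : Measurable fun ω => (f ω).re := Complex.measurable_re.comp hfm
  have hfim : Measurable fun ω => (f ω).im := Complex.measurable_im.comp hfm
  have hgrm : Measurable fun ω => (g ω).re := Complex.measurable_re.comp hgm
  have hgim : Measurable fun ω => (g ω).im := Complex.measurable_im.comp hgm
  have hfint : Integrable f ℙ := integrable_of_bdd hfm.aestronglyMeasurable hfb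
  have hgint : Integrable g ℙ := integrable_of_bdd hgm.aestronglyMeasurable hgb
  have hmulint : Integrable (fun ω => f ω * g ω) ℙ :=
    integrable_of_bdd (hfm.mul hgm).aestronglyMeasurable
      (fun ω => by
        calc ‖f ω * g ω‖ = ‖f ω‖ * ‖g ω‖ := norm_mul _ _
        _ ≤ 1 * 1 := mul_le_mul (hfb ω) (hgb ω) (norm_nonneg _) zero_le_one
        _ = 1 := one_mul 1)
  have prodint : ∀ (p q : Ω → ℝ), Measurable p → Measurable q → (∀ ω, ‖p ω‖ ≤ 1) →
      (∀ ω, ‖q ω‖ ≤ 1) → Integrable (fun ω => p ω * q ω) ℙ := fun p q hp hq hpb hqb =>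
    integrable_of_bdd (hp.mul hq).aestronglyMeasurable
      (fun ω => by
        calc ‖p ω * q ω‖ = ‖p ω‖ * ‖q ω‖ := norm_mul _ _
        _ ≤ 1 * 1 := mul_le_mul (hpb ω) (hqb ω) (norm_nonneg _) zero_le_one
        _ = 1 := one_mul 1)
  have irr : IndepFun (fun ω => (f ω).re) (fun ω => (g ω).re) ℙ :=
    hfg.comp Complex.measurable_re Complex.measurable_re
  have iri : IndepFun (fun ω => (f ω).re) (fun ω => (g ω).im) ℙ :=
    hfg.comp Complex.measurable_re Complex.measurable_im
  have iir : IndepFun (fun ω => (f ω).im) (fun ω => (g ω).re) ℙ :=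
    hfg.comp Complex.measurable_im Complex.measurable_re
  have iii : IndepFun (fun ω => (f ω).im) (fun ω => (g ω).im) ℙ :=
    hfg.comp Complex.measurable_im Complex.measurable_im
  have e1 : ∫ ω, (f ω).re ∂ℙ = (∫ ω, f ω ∂ℙ).re := by simpa using integral_re hfint
  have e2 : ∫ ω, (f ω).im ∂ℙ = (∫ ω, f ω ∂ℙ).im := by simpa using integral_im hfint
  have e3 : ∫ ω, (g ω).re ∂ℙ = (∫ ω, g ω ∂ℙ).re := by simpa using integral_re hgint
  have e4 : ∫ ω, (g ω).im ∂ℙ = (∫ ω, g ω ∂ℙ).im := by simpa using integral_im hgint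
  apply Complex.ext
  · have h1 : ∫ ω, (f ω * g ω).re ∂ℙ = (∫ ω, f ω * g ω ∂ℙ).re := by
      simpa using integral_re hmulint
    rw [← h1]
    have : ∀ ω, (f ω * g ω).re = (f ω).re * (g ω).re - (f ω).im * (g ω).im := fun ω =>
      Complex.mul_re _ _
    rw [integral_congr_ae (Filter.Eventually.of_forall this),
      integral_sub (prodint _ _ hfrm hgrm (hbre f hfb) (hbre g hgb))
        (prodint _ _ hfim hgim (hbim f hfb) (hbim g hgb)),
      irr.integral_fun_mul_eq_mul_integral hfrm.aestronglyMeasurable hgrm.aestronglyMeasurable,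
      iii.integral_fun_mul_eq_mul_integral hfim.aestronglyMeasurable hgim.aestronglyMeasurable,
      Complex.mul_re, e1, e2, e3, e4]
  · have h1 : ∫ ω, (f ω * g ω).im ∂ℙ = (∫ ω, f ω * g ω ∂ℙ).im := by
      simpa using integral_im hmulint
    rw [← h1]
    have : ∀ ω, (f ω * g ω).im = (f ω).re * (g ω).im + (f ω).im * (g ω).re := fun ω =>
      Complex.mul_im _ _
    rw [integral_congr_ae (Filter.Eventually.of_forall this),
      integral_add (prodint _ _ hfrm hgim (hbre f hfb) (hbim g hgb))
        (prodint _ _ hfim hgrm (hbim f hfb) (hbre g hgb)),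
      iri.integral_fun_mul_eq_mul_integral hfrm.aestronglyMeasurable hgim.aestronglyMeasurable,
      iir.integral_fun_mul_eq_mul_integral hfim.aestronglyMeasurable hgrm.aestronglyMeasurable,
      Complex.mul_im, e1, e2, e3, e4]

lemma double_sum_ite (n : ℕ) (c : ℂ) :
    ∑ j : Fin n, ∑ k : Fin n, (if j = k then (1:ℂ) else c) = n + ((n:ℂ)^2 - n) * c := by
  have key : ∀ j : Fin n, ∑ k : Fin n, (if j = k then (1:ℂ) else c) = (1 - c) + n * c := by
    intro j
    have : ∀ k : Fin n, (if j = k then (1:ℂ) else c) = (if j = k then (1-c) else 0) + c := by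
      intro k; by_cases hh : j = k <;> simp [hh]
    rw [Finset.sum_congr rfl fun k _ => this k, Finset.sum_add_distrib,
      Finset.sum_ite_eq Finset.univ j fun _ => (1:ℂ)-c]
    simp [Finset.card_univ, mul_comm]
  rw [Finset.sum_congr rfl fun j _ => key j]
  simp [Finset.card_univ]
  ring

/-- For every `t : ℝ`, the mean squared error of the kernel characteristic
function estimator decomposes as squared bias plus variance:
`E[|φ̂_{nh}(t) − φ(t)|²] = |φ_K(th) − 1|²·|φ(t)|² + |φ_K(th)|²·(1 − |φ(t)|²)/n`. -/
theorem kcfe_mse_decomposition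
    {Ω : Type*} [MeasureSpace Ω] [IsProbabilityMeasure (ℙ : Measure Ω)]
    (n : ℕ) (hn : 0 < n) (X : Fin n → Ω → ℝ)
    (hmeas : ∀ j, Measurable (X j))
    (hindep : iIndepFun X ℙ)
    (hident : ∀ j, Measure.map (X j) ℙ = Measure.map (X ⟨0, hn⟩) ℙ)
    (K : ℝ → ℝ) (hKint : Integrable K) (hK0 : ∀ z, 0 ≤ K z) (hK1 : ∫ z, K z = 1)
    (h : ℝ) (hh : 0 < h) (t : ℝ) :
    ∫ ω, ‖empCharFun X t ω * kernelCF K (t * h) - charFunRV (X ⟨0, hn⟩) t‖ ^ 2 ∂ℙ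
      = ‖kernelCF K (t * h) - 1‖ ^ 2 * ‖charFunRV (X ⟨0, hn⟩) t‖ ^ 2
        + ‖kernelCF K (t * h)‖ ^ 2 * (1 - ‖charFunRV (X ⟨0, hn⟩) t‖ ^ 2) / n := by
  set a : ℂ := kernelCF K (t * h) with ha
  set φ : ℂ := charFunRV (X ⟨0, hn⟩) t with hφ
  have hn0 : (n : ℂ) ≠ 0 := Nat.cast_ne_zero.mpr hn.ne'
  have hnR : (n : ℝ) ≠ 0 := Nat.cast_ne_zero.mpr hn.ne'
  set F : ℝ → ℂ := fun x => Complex.exp (Complex.I * (t : ℂ) * (x : ℂ)) with hF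
  have hFm : Measurable F := by fun_prop
  have hFb : ∀ x, ‖F x‖ = 1 := by
    intro x
    have hx : Complex.I * (t : ℂ) * (x : ℂ) = ((t * x : ℝ) : ℂ) * Complex.I := by
      push_cast; ring
    rw [hF]
    simp only []
    rw [hx, Complex.norm_exp_ofReal_mul_I]
  set f : Fin n → Ω → ℂ := fun j ω => F (X j ω) with hf
  have hfm : ∀ j, Measurable (f j) := fun j => hFm.comp (hmeas j)
  have hfb : ∀ j ω, ‖f j ω‖ = 1 := fun j ω => hFb _
  have hfint : ∀ j, Integrable (f j) ℙ := fun j =>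
    integrable_of_bdd (hfm j).aestronglyMeasurable (fun ω => le_of_eq (hfb j ω))
  -- expectation of each f j is φ
  have hEf : ∀ j, ∫ ω, f j ω ∂ℙ = φ := by
    intro j
    have h1 : ∫ ω, f j ω ∂ℙ = ∫ x, F x ∂(Measure.map (X j) ℙ) :=
      (integral_map (hmeas j).aemeasurable hFm.aestronglyMeasurable).symm
    have h2 : ∫ x, F x ∂(Measure.map (X ⟨0, hn⟩) ℙ) = ∫ ω, F (X ⟨0, hn⟩ ω) ∂ℙ :=
      integral_map (hmeas _).aemeasurable hFm.aestronglyMeasurable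
    rw [h1, hident j, h2]; rfl
  have hconjb : ∀ j ω, ‖conj (f j ω)‖ ≤ 1 := fun j ω => by
    simp [hfb j ω]
  have hconjm : ∀ j, Measurable fun ω => conj (f j ω) := fun j =>
    Complex.continuous_conj.measurable.comp (hfm j)
  -- cross expectation
  have hpair : ∀ j k, ∫ ω, f j ω * conj (f k ω) ∂ℙ = if j = k then 1 else φ * conj φ := by
    intro j k
    by_cases hjk : j = k
    · subst hjk
      simp only [if_pos rfl]
      have : ∀ ω, f j ω * conj (f j ω) = 1 := by
        intro ω
        rw [Complex.mul_conj]
        norm_cast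
        rw [← Complex.sq_norm, hfb j ω]; norm_num
      rw [integral_congr_ae (Filter.Eventually.of_forall this)]
      simp
    · simp only [if_neg hjk]
      have hcm : Measurable fun x : ℝ => conj (F x) :=
        Complex.continuous_conj.measurable.comp hFm
      have hind : IndepFun (f j) (fun ω => conj (f k ω)) ℙ :=
        (hindep.indepFun hjk).comp hFm hcm
      rw [indep_integral_mul_complex hind (hfm j) (hconjm k)
        (fun ω => le_of_eq (hfb j ω)) (hconjb k), hEf j]
      have : ∫ ω, conj (f k ω) ∂ℙ = conj φ := by rw [integral_conj, hEf k]
      rw [this]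
  set S : Ω → ℂ := fun ω => ∑ j, f j ω with hS
  have hSm : Measurable S := Finset.measurable_sum Finset.univ fun j _ => hfm j
  have hSb : ∀ ω, ‖S ω‖ ≤ n := fun ω => by
    calc ‖S ω‖ ≤ ∑ j : Fin n, ‖f j ω‖ := norm_sum_le _ _
    _ = ∑ _j : Fin n, (1:ℝ) := by simp [hfb]
    _ = n := by simp
  have hSint : Integrable S ℙ := integrable_of_bdd hSm.aestronglyMeasurable hSb
  have hES : ∫ ω, S ω ∂ℙ = n * φ := by
    rw [hS]
    rw [integral_finset_sum Finset.univ fun j _ => hfint j]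
    rw [Finset.sum_congr rfl fun j _ => hEf j]
    simp [Finset.card_univ, nsmul_eq_mul]
  have hEconjS : ∫ ω, conj (S ω) ∂ℙ = n * conj φ := by
    rw [integral_conj, hES, map_mul, map_natCast]
  have htermint : ∀ j k, Integrable (fun ω => f j ω * conj (f k ω)) ℙ := fun j k =>
    integrable_of_bdd ((hfm j).mul (hconjm k)).aestronglyMeasurable
      (fun ω => by
        calc ‖f j ω * conj (f k ω)‖ = ‖f j ω‖ * ‖conj (f k ω)‖ := norm_mul _ _
        _ ≤ 1 * 1 := mul_le_mul (le_of_eq (hfb j ω)) (hconjb k ω) (norm_nonneg _) zero_le_one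
        _ = 1 := one_mul 1)
  have hESS : ∫ ω, S ω * conj (S ω) ∂ℙ = n + ((n:ℂ)^2 - n) * (φ * conj φ) := by
    have hsplit : ∀ ω, S ω * conj (S ω) = ∑ j : Fin n, ∑ k : Fin n, f j ω * conj (f k ω) := by
      intro ω
      rw [hS]
      simp only [map_sum]
      rw [Finset.sum_mul_sum]
    rw [integral_congr_ae (Filter.Eventually.of_forall hsplit),
      integral_finset_sum Finset.univ fun j _ =>
        integrable_finset_sum Finset.univ fun k _ => htermint j k]
    rw [Finset.sum_congr rfl fun j _ =>
      integral_finset_sum Finset.univ fun k _ => htermint j k]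
    rw [Finset.sum_congr rfl fun j _ => Finset.sum_congr rfl fun k _ => hpair j k]
    exact double_sum_ite n (φ * conj φ)
  -- the estimator difference
  have hemp : ∀ ω, empCharFun X t ω = (1 / (n:ℂ)) * S ω := fun ω => rfl
  have hexp : ∀ ω, (empCharFun X t ω * a - φ) * conj (empCharFun X t ω * a - φ)
      = (a * conj a * ((n:ℂ))⁻¹ * ((n:ℂ))⁻¹) * (S ω * conj (S ω))
        - (a * conj φ * ((n:ℂ))⁻¹) * S ω
        - (conj a * φ * ((n:ℂ))⁻¹) * conj (S ω)
        + φ * conj φ := by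
    intro ω
    rw [hemp ω]
    simp only [map_sub, map_mul, map_div₀, map_one, map_natCast]
    ring
  have hSSint : Integrable (fun ω => S ω * conj (S ω)) ℙ :=
    integrable_of_bdd (hSm.mul (Complex.continuous_conj.measurable.comp hSm)).aestronglyMeasurable
      (C := (n:ℝ) * n)
      (fun ω => by
        calc ‖S ω * conj (S ω)‖ = ‖S ω‖ * ‖conj (S ω)‖ := norm_mul _ _
        _ ≤ (n:ℝ) * n := by
            have := hSb ω
            have h2 : ‖conj (S ω)‖ = ‖S ω‖ := by simp
            rw [h2]
            exact mul_le_mul this this (norm_nonneg _) (Nat.cast_nonneg n))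
  have hconjSint : Integrable (fun ω => conj (S ω)) ℙ :=
    integrable_of_bdd (Complex.continuous_conj.measurable.comp hSm).aestronglyMeasurable
      (C := (n:ℝ)) (fun ω => by simpa using hSb ω)
  -- compute the complex integral
  have hDint : ∫ ω, (empCharFun X t ω * a - φ) * conj (empCharFun X t ω * a - φ) ∂ℙ
      = (a * conj a * ((n:ℂ))⁻¹ * ((n:ℂ))⁻¹) * ((n:ℂ) + ((n:ℂ)^2 - n) * (φ * conj φ))
        - (a * conj φ * ((n:ℂ))⁻¹) * ((n:ℂ) * φ)
        - (conj a * φ * ((n:ℂ))⁻¹) * ((n:ℂ) * conj φ)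
        + φ * conj φ := by
    rw [integral_congr_ae (Filter.Eventually.of_forall hexp)]
    have i1 : Integrable (fun ω => (a * conj a * ((n:ℂ))⁻¹ * ((n:ℂ))⁻¹) *
        (S ω * conj (S ω))) ℙ := hSSint.const_mul _
    have i2 : Integrable (fun ω => (a * conj φ * ((n:ℂ))⁻¹) * S ω) ℙ := hSint.const_mul _
    have i3 : Integrable (fun ω => (conj a * φ * ((n:ℂ))⁻¹) * conj (S ω)) ℙ :=
      hconjSint.const_mul _
    have i12 : Integrable (fun ω => (a * conj a * ((n:ℂ))⁻¹ * ((n:ℂ))⁻¹) *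
        (S ω * conj (S ω)) - (a * conj φ * ((n:ℂ))⁻¹) * S ω) ℙ := i1.sub i2
    have i123 : Integrable (fun ω => (a * conj a * ((n:ℂ))⁻¹ * ((n:ℂ))⁻¹) *
        (S ω * conj (S ω)) - (a * conj φ * ((n:ℂ))⁻¹) * S ω
        - (conj a * φ * ((n:ℂ))⁻¹) * conj (S ω)) ℙ := i12.sub i3
    rw [integral_add i123 (integrable_const _), integral_sub i12 i3, integral_sub i1 i2,
      integral_const_mul, integral_const_mul, integral_const_mul, integral_const,
      hESS, hES, hEconjS]
    simp [measure_univ]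
  set A : ℝ := Complex.normSq a with hA
  set B : ℝ := Complex.normSq φ with hB
  have hvalR : ((a * conj a * ((n:ℂ))⁻¹ * ((n:ℂ))⁻¹) * ((n:ℂ) + ((n:ℂ)^2 - n) * (φ * conj φ))
        - (a * conj φ * ((n:ℂ))⁻¹) * ((n:ℂ) * φ)
        - (conj a * φ * ((n:ℂ))⁻¹) * ((n:ℂ) * conj φ)
        + φ * conj φ)
      = (((A * (1/(n:ℝ) + (1 - 1/(n:ℝ)) * B) - 2 * a.re * B + B : ℝ)) : ℂ) := by
    have h1 : a * conj a = (A : ℂ) := Complex.mul_conj a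
    have h2 : φ * conj φ = (B : ℂ) := Complex.mul_conj φ
    have h3 : a + conj a = ((2 * a.re : ℝ) : ℂ) := Complex.add_conj a
    calc ((a * conj a * ((n:ℂ))⁻¹ * ((n:ℂ))⁻¹) * ((n:ℂ) + ((n:ℂ)^2 - n) * (φ * conj φ))
        - (a * conj φ * ((n:ℂ))⁻¹) * ((n:ℂ) * φ)
        - (conj a * φ * ((n:ℂ))⁻¹) * ((n:ℂ) * conj φ)
        + φ * conj φ)
        = (a * conj a) * ((n:ℂ)⁻¹ + (1 - (n:ℂ)⁻¹) * (φ * conj φ))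
          - (a + conj a) * (φ * conj φ) + φ * conj φ := by
          field_simp
          ring
    _ = (A : ℂ) * ((n:ℂ)⁻¹ + (1 - (n:ℂ)⁻¹) * (B:ℂ)) - ((2 * a.re : ℝ):ℂ) * (B:ℂ) + (B:ℂ) := by
        rw [h1, h2, h3]
    _ = _ := by push_cast; ring
  -- integrability of the squared difference
  have hempm : Measurable (empCharFun X t) := by
    have : empCharFun X t = fun ω => (1/(n:ℂ)) * S ω := funext hemp
    rw [this]; exact hSm.const_mul _
  have hDm : Measurable fun ω => (empCharFun X t ω * a - φ) *
      conj (empCharFun X t ω * a - φ) := by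
    have h1 : Measurable fun ω => empCharFun X t ω * a - φ :=
      (hempm.mul_const a).sub_const φ
    exact h1.mul (Complex.continuous_conj.measurable.comp h1)
  have hDb : ∀ ω, ‖(empCharFun X t ω * a - φ) * conj (empCharFun X t ω * a - φ)‖
      ≤ (‖a‖ + ‖φ‖) * (‖a‖ + ‖φ‖) := by
    intro ω
    have hbd : ‖empCharFun X t ω * a - φ‖ ≤ ‖a‖ + ‖φ‖ := by
      calc ‖empCharFun X t ω * a - φ‖ ≤ ‖empCharFun X t ω * a‖ + ‖φ‖ := norm_sub_le _ _
      _ = ‖empCharFun X t ω‖ * ‖a‖ + ‖φ‖ := by rw [norm_mul]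
      _ ≤ 1 * ‖a‖ + ‖φ‖ := by
          have hone : ‖empCharFun X t ω‖ ≤ 1 := by
            rw [hemp ω, norm_mul]
            have h1 : ‖(1/(n:ℂ))‖ = 1/(n:ℝ) := by
              rw [norm_div, norm_one]
              simp
            rw [h1]
            have h2 : 1/(n:ℝ) * ‖S ω‖ ≤ 1/(n:ℝ) * n := by
              gcongr
              exact hSb ω
            calc 1/(n:ℝ) * ‖S ω‖ ≤ 1/(n:ℝ) * n := h2
            _ = 1 := by field_simp
          gcongr
      _ = ‖a‖ + ‖φ‖ := by ring
    calc ‖(empCharFun X t ω * a - φ) * conj (empCharFun X t ω * a - φ)‖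
        = ‖empCharFun X t ω * a - φ‖ * ‖conj (empCharFun X t ω * a - φ)‖ := norm_mul _ _
    _ = ‖empCharFun X t ω * a - φ‖ * ‖empCharFun X t ω * a - φ‖ := by
        rw [RCLike.norm_conj]
    _ ≤ (‖a‖ + ‖φ‖) * (‖a‖ + ‖φ‖) :=
        mul_le_mul hbd hbd (norm_nonneg _) (by positivity)
  have hDint2 : Integrable (fun ω => (empCharFun X t ω * a - φ) *
      conj (empCharFun X t ω * a - φ)) ℙ :=
    integrable_of_bdd hDm.aestronglyMeasurable hDb
  -- convert norm squared to real part
  have hnorm : ∀ ω : Ω, ‖empCharFun X t ω * a - φ‖ ^ 2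
      = ((empCharFun X t ω * a - φ) * conj (empCharFun X t ω * a - φ)).re := by
    intro ω
    rw [Complex.mul_conj, Complex.ofReal_re, Complex.sq_norm]
  calc ∫ ω, ‖empCharFun X t ω * a - φ‖ ^ 2 ∂ℙ
      = ∫ ω, ((empCharFun X t ω * a - φ) * conj (empCharFun X t ω * a - φ)).re ∂ℙ :=
        integral_congr_ae (Filter.Eventually.of_forall hnorm)
    _ = (∫ ω, (empCharFun X t ω * a - φ) * conj (empCharFun X t ω * a - φ) ∂ℙ).re := by
        simpa using integral_re hDint2
    _ = A * (1/(n:ℝ) + (1 - 1/(n:ℝ)) * B) - 2 * a.re * B + B := by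
        rw [hDint, hvalR, Complex.ofReal_re]
    _ = ‖a - 1‖ ^ 2 * ‖φ‖ ^ 2 + ‖a‖ ^ 2 * (1 - ‖φ‖ ^ 2) / n := by
        have e1 : ‖a‖ ^ 2 = A := by rw [Complex.sq_norm]
        have e2 : ‖φ‖ ^ 2 = B := by rw [Complex.sq_norm]
        have e3 : ‖a - 1‖ ^ 2 = A - 2 * a.re + 1 := by
          rw [Complex.sq_norm, hA]
          simp [Complex.normSq_apply, Complex.sub_re, Complex.sub_im]
          ring
        rw [e1, e2, e3]
        field_simp
        ring
end

section
/- For the KCFE built with the Gaussian kernel with parameter α > 0 and bandwidth h > 0, for every t ∈ ℝ, writing u = exp(−t²h²α²/4), the mean squared error satisfies E[|φ̂_{nh}(t) − φ(t)|²] = (u − 1)²·|φ(t)|² + u²·(1 − |φ(t)|²)/n. -/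
open MeasureTheory ProbabilityTheory Finset

/-- The Gaussian kernel with parameter `α`: `K(z) = (√π·α)⁻¹·exp(−z²/α²)`. -/
noncomputable def gaussKernel (α : ℝ) (z : ℝ) : ℝ :=
  (Real.sqrt Real.pi * α)⁻¹ * Real.exp (-(z ^ 2) / α ^ 2)

section aux

open Complex

lemma aux_integral_mul_complex {Ω : Type*} {mΩ : MeasurableSpace Ω} {μ : Measure Ω}
    {X Y : Ω → ℂ} (hXY : IndepFun X Y μ) (hX : Integrable X μ) (hY : Integrable Y μ) :
    ∫ ω, X ω * Y ω ∂μ = (∫ ω, X ω ∂μ) * ∫ ω, Y ω ∂μ := by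
  have hXY' : Integrable (fun ω => X ω * Y ω) μ := hXY.integrable_mul hX hY
  have hrr := (hXY.comp Complex.measurable_re Complex.measurable_re).integral_mul_eq_mul_integral
    hX.re.aestronglyMeasurable hY.re.aestronglyMeasurable
  have hri := (hXY.comp Complex.measurable_re Complex.measurable_im).integral_mul_eq_mul_integral
    hX.re.aestronglyMeasurable hY.im.aestronglyMeasurable
  have hir := (hXY.comp Complex.measurable_im Complex.measurable_re).integral_mul_eq_mul_integral
    hX.im.aestronglyMeasurable hY.re.aestronglyMeasurable
  have hii := (hXY.comp Complex.measurable_im Complex.measurable_im).integral_mul_eq_mul_integral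
    hX.im.aestronglyMeasurable hY.im.aestronglyMeasurable
  have hrr' : ∫ ω, (X ω).re * (Y ω).re ∂μ = (∫ ω, (X ω).re ∂μ) * ∫ ω, (Y ω).re ∂μ := hrr
  have hri' : ∫ ω, (X ω).re * (Y ω).im ∂μ = (∫ ω, (X ω).re ∂μ) * ∫ ω, (Y ω).im ∂μ := hri
  have hir' : ∫ ω, (X ω).im * (Y ω).re ∂μ = (∫ ω, (X ω).im ∂μ) * ∫ ω, (Y ω).re ∂μ := hir
  have hii' : ∫ ω, (X ω).im * (Y ω).im ∂μ = (∫ ω, (X ω).im ∂μ) * ∫ ω, (Y ω).im ∂μ := hii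
  have irr : Integrable (fun ω => (X ω).re * (Y ω).re) μ :=
    (hXY.comp Complex.measurable_re Complex.measurable_re).integrable_mul hX.re hY.re
  have iri : Integrable (fun ω => (X ω).re * (Y ω).im) μ :=
    (hXY.comp Complex.measurable_re Complex.measurable_im).integrable_mul hX.re hY.im
  have iir : Integrable (fun ω => (X ω).im * (Y ω).re) μ :=
    (hXY.comp Complex.measurable_im Complex.measurable_re).integrable_mul hX.im hY.re
  have iii : Integrable (fun ω => (X ω).im * (Y ω).im) μ :=
    (hXY.comp Complex.measurable_im Complex.measurable_im).integrable_mul hX.im hY.im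
  have hXre : ∫ ω, (X ω).re ∂μ = (∫ ω, X ω ∂μ).re := by
    simpa using integral_re hX
  have hXim : ∫ ω, (X ω).im ∂μ = (∫ ω, X ω ∂μ).im := by
    simpa using integral_im hX
  have hYre : ∫ ω, (Y ω).re ∂μ = (∫ ω, Y ω ∂μ).re := by
    simpa using integral_re hY
  have hYim : ∫ ω, (Y ω).im ∂μ = (∫ ω, Y ω ∂μ).im := by
    simpa using integral_im hY
  have hPre : (∫ ω, X ω * Y ω ∂μ).re = ∫ ω, (X ω * Y ω).re ∂μ := by
    simpa using (integral_re hXY').symm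
  have hPim : (∫ ω, X ω * Y ω ∂μ).im = ∫ ω, (X ω * Y ω).im ∂μ := by
    simpa using (integral_im hXY').symm
  apply Complex.ext
  · rw [hPre]
    simp only [Complex.mul_re]
    rw [integral_sub irr iii, hrr', hii', hXre, hYre, hXim, hYim]
  · rw [hPim]
    simp only [Complex.mul_im]
    rw [integral_add iri iir, hri', hir', hXre, hYre, hXim, hYim]

lemma gaussKernelCF {α : ℝ} (hα : 0 < α) (s : ℝ) :
    kernelCF (gaussKernel α) s = (Real.exp (-(s ^ 2 * α ^ 2) / 4) : ℂ) := by
  have hb : (0:ℝ) < ((1 / (α:ℂ) ^ 2)).re := by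
    simp only [one_div]
    rw [← Complex.ofReal_pow, ← Complex.ofReal_inv, Complex.ofReal_re]
    positivity
  have key := fourierIntegral_gaussian hb (s : ℂ)
  have heq : ∀ z : ℝ, ((gaussKernel α z : ℝ) : ℂ) * Complex.exp (Complex.I * (s : ℂ) * (z : ℂ))
      = ((Real.sqrt Real.pi * α)⁻¹ : ℂ) *
        (Complex.exp (Complex.I * (s : ℂ) * (z : ℂ)) * Complex.exp (-(1 / (α:ℂ) ^ 2) * (z:ℂ) ^ 2)) := by
    intro z
    simp only [gaussKernel]
    push_cast
    rw [show -(z:ℂ) ^ 2 / (α:ℂ) ^ 2 = -(1 / (α:ℂ) ^ 2) * (z:ℂ) ^ 2 by ring]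
    ring
  rw [kernelCF]
  simp_rw [heq]
  rw [integral_const_mul, key]
  have h1 : ((Real.pi : ℂ) / (1 / (α:ℂ) ^ 2)) ^ (1 / 2 : ℂ) = ((Real.sqrt Real.pi * α : ℝ) : ℂ) := by
    have hπα : (Real.pi : ℂ) / (1 / (α:ℂ) ^ 2) = ((Real.pi * α ^ 2 : ℝ) : ℂ) := by
      push_cast
      field_simp
    rw [hπα]
    rw [show (1 / 2 : ℂ) = ((1 / 2 : ℝ) : ℂ) by norm_num]
    rw [← Complex.ofReal_cpow (by positivity)]
    rw [← Real.sqrt_eq_rpow, Real.sqrt_mul Real.pi_pos.le, Real.sqrt_sq hα.le]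
  have h2 : -(s:ℂ) ^ 2 / (4 * (1 / (α:ℂ) ^ 2)) = ((-(s ^ 2 * α ^ 2) / 4 : ℝ) : ℂ) := by
    have : ((α:ℂ))^2 ≠ 0 := by
      simpa using pow_ne_zero 2 (Complex.ofReal_ne_zero.mpr hα.ne')
    field_simp
    push_cast
    ring
  rw [h1, h2, ← Complex.ofReal_exp]
  have hne : ((Real.sqrt Real.pi : ℝ) : ℂ) * (α : ℂ) ≠ 0 := by
    rw [← Complex.ofReal_mul]
    exact_mod_cast (by positivity : Real.sqrt Real.pi * α ≠ 0)
  push_cast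
  rw [← mul_assoc, inv_mul_cancel₀ hne, one_mul]

end aux

/-- For the KCFE built with the Gaussian kernel with parameter `α > 0` and
bandwidth `h > 0`, for every `t : ℝ`, writing `u = exp(−t²h²α²/4)`, the mean squared error
satisfies `E[|φ̂_{nh}(t) − φ(t)|²] = (u − 1)²·|φ(t)|² + u²·(1 − |φ(t)|²)/n`. -/
theorem gaussian_kcfe_mse
    {Ω : Type*} [MeasureSpace Ω] [IsProbabilityMeasure (ℙ : Measure Ω)]
    (n : ℕ) (hn : 0 < n) (X : Fin n → Ω → ℝ)
    (hmeas : ∀ j, Measurable (X j))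
    (hindep : iIndepFun X ℙ)
    (hident : ∀ j, Measure.map (X j) ℙ = Measure.map (X ⟨0, hn⟩) ℙ)
    (α : ℝ) (hα : 0 < α) (h : ℝ) (hh : 0 < h) (t : ℝ) :
    ∫ ω, ‖empCharFun X t ω * kernelCF (gaussKernel α) (t * h)
          - charFunRV (X ⟨0, hn⟩) t‖ ^ 2 ∂ℙ
      = (Real.exp (-(t ^ 2 * h ^ 2 * α ^ 2) / 4) - 1) ^ 2 * ‖charFunRV (X ⟨0, hn⟩) t‖ ^ 2
        + (Real.exp (-(t ^ 2 * h ^ 2 * α ^ 2) / 4)) ^ 2 *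
            (1 - ‖charFunRV (X ⟨0, hn⟩) t‖ ^ 2) / n := by
  classical
  set u : ℝ := Real.exp (-(t ^ 2 * h ^ 2 * α ^ 2) / 4) with hu
  have hker : kernelCF (gaussKernel α) (t * h) = (u : ℂ) := by
    rw [gaussKernelCF hα, hu]
    norm_num
    ring_nf
  set φ : ℂ := charFunRV (X ⟨0, hn⟩) t with hφ
  -- basic objects
  set g : ℝ → ℂ := fun x => Complex.exp (Complex.I * (t : ℂ) * (x : ℂ)) with hg
  have hgm : Measurable g :=
    Complex.measurable_exp.comp (measurable_const.mul Complex.measurable_ofReal)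
  set e : Fin n → Ω → ℂ := fun j ω => g (X j ω) with he
  have hme : ∀ j, Measurable (e j) := fun j => hgm.comp (hmeas j)
  have hnorm : ∀ j ω, ‖e j ω‖ = 1 := by
    intro j ω
    simp [he, hg, Complex.norm_exp]
  have ibdd : ∀ {f : Ω → ℂ}, AEStronglyMeasurable f ℙ → ∀ (C : ℝ), (∀ ω, ‖f ω‖ ≤ C) →
      Integrable f ℙ := fun hf C hC => (integrable_const C).mono' hf (ae_of_all _ hC)
  have hie : ∀ j, Integrable (e j) ℙ := fun j =>
    ibdd (hme j).aestronglyMeasurable 1 (fun ω => (hnorm j ω).le)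
  have hEe : ∀ j, ∫ ω, e j ω ∂ℙ = φ := by
    intro j
    have h1 : ∫ ω, e j ω ∂ℙ = ∫ x, g x ∂(Measure.map (X j) ℙ) :=
      (integral_map (hmeas j).aemeasurable hgm.aestronglyMeasurable).symm
    rw [h1, hident j, integral_map (hmeas _).aemeasurable hgm.aestronglyMeasurable]
    rfl
  have hiec : ∀ k, Integrable (fun ω => (starRingEnd ℂ) (e k ω)) ℙ := fun k =>
    ibdd (Complex.continuous_conj.measurable.comp (hme k)).aestronglyMeasurable 1
      (fun ω => by simp [RCLike.norm_conj, hnorm k ω])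
  have hEec : ∀ k, ∫ ω, (starRingEnd ℂ) (e k ω) ∂ℙ = (starRingEnd ℂ) φ := by
    intro k
    rw [integral_conj, hEe k]
  have iee : ∀ j k, Integrable (fun ω => e j ω * (starRingEnd ℂ) (e k ω)) ℙ := by
    intro j k
    refine ibdd (((hme j).mul (Complex.continuous_conj.measurable.comp (hme k))).aestronglyMeasurable) 1 (fun ω => ?_)
    rw [norm_mul]
    simp [RCLike.norm_conj, hnorm]
  have keyfull : ∀ j k, ∫ ω, e j ω * (starRingEnd ℂ) (e k ω) ∂ℙ
      = if j = k then 1 else φ * (starRingEnd ℂ) φ := by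
    intro j k
    by_cases hjk : j = k
    · subst hjk
      simp only [if_pos rfl]
      have : ∀ ω, e j ω * (starRingEnd ℂ) (e j ω) = 1 := by
        intro ω
        rw [Complex.mul_conj]
        rw [← Complex.sq_norm, hnorm j ω]
        norm_num
      simp_rw [this]
      simp
    · rw [if_neg hjk]
      have hind : IndepFun (e j) (fun ω => (starRingEnd ℂ) (e k ω)) ℙ := by
        have := (hindep.indepFun hjk).comp hgm (Complex.continuous_conj.measurable.comp hgm)
        exact this
      rw [aux_integral_mul_complex hind (hie j) (hiec k), hEe j, hEec k]
  -- the sum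
  set Sf : Ω → ℂ := fun ω => ∑ j : Fin n, e j ω with hSf
  have hSm : Measurable Sf := Finset.measurable_sum _ (fun j _ => hme j)
  have hSnorm : ∀ ω, ‖Sf ω‖ ≤ n := by
    intro ω
    calc ‖Sf ω‖ ≤ ∑ j : Fin n, ‖e j ω‖ := norm_sum_le _ _
    _ = n := by simp [hnorm]
  have hSint : Integrable Sf ℙ := integrable_finset_sum _ (fun j _ => hie j)
  have hES : ∫ ω, Sf ω ∂ℙ = (n : ℂ) * φ := by
    rw [hSf, integral_finset_sum _ (fun j _ => hie j)]
    simp [hEe, Finset.card_univ]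
  set a : ℂ := (u : ℂ) / (n : ℂ) with ha
  have hZ : ∀ ω, empCharFun X t ω * (u : ℂ) - φ = a * Sf ω - φ := by
    intro ω
    simp only [empCharFun, ha, hSf, he, hg]
    ring
  have hca : (starRingEnd ℂ) a = a := by
    simp [ha, map_div₀, Complex.conj_ofReal]
  have hexpand : ∀ ω, (a * Sf ω - φ) * (starRingEnd ℂ) (a * Sf ω - φ)
      = a * a * (Sf ω * (starRingEnd ℂ) (Sf ω))
        - (a * (starRingEnd ℂ) φ) * Sf ω
        - (a * φ) * (starRingEnd ℂ) (Sf ω)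
        + φ * (starRingEnd ℂ) φ := by
    intro ω
    rw [map_sub, map_mul, hca]
    ring
  -- integrability of the pieces
  have iP1 : Integrable (fun ω => a * a * (Sf ω * (starRingEnd ℂ) (Sf ω))) ℙ := by
    refine ibdd (((hSm.mul (Complex.continuous_conj.measurable.comp hSm)).const_mul _).aestronglyMeasurable)
      (‖a‖ * ‖a‖ * ((n:ℝ) * n)) (fun ω => ?_)
    have h1 := hSnorm ω
    have h0 : (0:ℝ) ≤ ‖Sf ω‖ := norm_nonneg _
    simp only [norm_mul, RCLike.norm_conj]
    have h3 : ‖Sf ω‖ * ‖Sf ω‖ ≤ (n:ℝ) * n := mul_le_mul h1 h1 h0 (Nat.cast_nonneg n)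
    exact mul_le_mul_of_nonneg_left h3 (by positivity)
  have iP2 : Integrable (fun ω => (a * (starRingEnd ℂ) φ) * Sf ω) ℙ := hSint.const_mul _
  have iP3 : Integrable (fun ω => (a * φ) * (starRingEnd ℂ) (Sf ω)) ℙ := by
    have : Integrable (fun ω => (starRingEnd ℂ) (Sf ω)) ℙ := by
      refine ibdd (Complex.continuous_conj.measurable.comp hSm).aestronglyMeasurable n (fun ω => ?_)
      rw [RCLike.norm_conj]
      exact hSnorm ω
    exact this.const_mul _
  have iZZ : Integrable (fun ω => (a * Sf ω - φ) * (starRingEnd ℂ) (a * Sf ω - φ)) ℙ := by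
    simp_rw [hexpand]
    exact ((iP1.sub iP2).sub iP3).add (integrable_const _)
  -- compute ∫ Sf * conj Sf
  have hSS : ∫ ω, Sf ω * (starRingEnd ℂ) (Sf ω) ∂ℙ
      = (n : ℂ) * ((n : ℂ) * (φ * (starRingEnd ℂ) φ) + (1 - φ * (starRingEnd ℂ) φ)) := by
    have hpt : ∀ ω, Sf ω * (starRingEnd ℂ) (Sf ω)
        = ∑ j : Fin n, ∑ k : Fin n, e j ω * (starRingEnd ℂ) (e k ω) := by
      intro ω
      rw [hSf]
      rw [map_sum, Finset.sum_mul_sum]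
    simp_rw [hpt]
    rw [integral_finset_sum _ (fun j _ => integrable_finset_sum _ (fun k _ => iee j k))]
    have : ∀ j : Fin n, ∫ ω, ∑ k : Fin n, e j ω * (starRingEnd ℂ) (e k ω) ∂ℙ
        = (n : ℂ) * (φ * (starRingEnd ℂ) φ) + (1 - φ * (starRingEnd ℂ) φ) := by
      intro j
      rw [integral_finset_sum _ (fun k _ => iee j k)]
      simp_rw [keyfull j]
      have : ∀ k : Fin n, (if j = k then (1:ℂ) else φ * (starRingEnd ℂ) φ)
          = (if j = k then (1 - φ * (starRingEnd ℂ) φ) else 0) + φ * (starRingEnd ℂ) φ := by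
        intro k
        split <;> ring
      simp_rw [this]
      rw [Finset.sum_add_distrib, Finset.sum_ite_eq, Finset.sum_const, Finset.card_univ]
      simp only [Finset.mem_univ, if_true, Fintype.card_fin, nsmul_eq_mul]
      ring
    simp_rw [this]
    rw [Finset.sum_const, Finset.card_univ, Fintype.card_fin, nsmul_eq_mul]
  -- main computation
  have hq : φ * (starRingEnd ℂ) φ = ((‖φ‖ ^ 2 : ℝ) : ℂ) := by
    rw [Complex.mul_conj, ← Complex.sq_norm]
  have hnR : ((n:ℝ)) ≠ 0 := Nat.cast_ne_zero.mpr hn.ne'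
  have hnC : ((n:ℂ)) ≠ 0 := Nat.cast_ne_zero.mpr hn.ne'
  have hV : ∫ ω, (a * Sf ω - φ) * (starRingEnd ℂ) (a * Sf ω - φ) ∂ℙ
      = (((u/n)^2 * (n*(n*‖φ‖^2 + (1 - ‖φ‖^2))) - (u/n)*‖φ‖^2*n - (u/n)*‖φ‖^2*n + ‖φ‖^2 : ℝ) : ℂ) := by
    simp_rw [hexpand]
    have iP12 : Integrable (fun ω => a * a * (Sf ω * (starRingEnd ℂ) (Sf ω))
        - a * (starRingEnd ℂ) φ * Sf ω) ℙ := iP1.sub iP2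
    have iP123 : Integrable (fun ω => a * a * (Sf ω * (starRingEnd ℂ) (Sf ω))
        - a * (starRingEnd ℂ) φ * Sf ω - a * φ * (starRingEnd ℂ) (Sf ω)) ℙ := iP12.sub iP3
    rw [integral_add iP123 (integrable_const _), integral_sub iP12 iP3, integral_sub iP1 iP2]
    rw [integral_const_mul, integral_const_mul, integral_const_mul]
    rw [hSS, hES, integral_conj, hES, integral_const]
    simp only [measure_univ, probReal_univ, ENNReal.toReal_one, one_smul]
    rw [map_mul, Complex.conj_natCast]
    simp only [mul_comm ((starRingEnd ℂ) φ) φ, hq]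
    have hq2 : (starRingEnd ℂ) φ * φ = ((‖φ‖ ^ 2 : ℝ) : ℂ) := by rw [mul_comm]; exact hq
    rw [ha]
    push_cast at hq2 ⊢
    linear_combination (-(2 * (u:ℂ) * (n:ℂ) * ((n:ℂ))⁻¹)) * hq2
  -- put everything together
  calc ∫ ω, ‖empCharFun X t ω * kernelCF (gaussKernel α) (t * h) - φ‖ ^ 2 ∂ℙ
      = ∫ ω, ((a * Sf ω - φ) * (starRingEnd ℂ) (a * Sf ω - φ)).re ∂ℙ := by
        apply integral_congr_ae
        filter_upwards with ω
        rw [hker, hZ ω, Complex.mul_conj, ← Complex.sq_norm,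
          Complex.ofReal_re]
    _ = (∫ ω, (a * Sf ω - φ) * (starRingEnd ℂ) (a * Sf ω - φ) ∂ℙ).re := by
        simpa only [RCLike.re_to_complex] using (integral_re iZZ)
    _ = (u - 1) ^ 2 * ‖φ‖ ^ 2 + u ^ 2 * (1 - ‖φ‖ ^ 2) / n := by
        rw [hV, Complex.ofReal_re]
        field_simp
        ring
end

section
/- (Characteristic function of the Fock-state tomogram.) For every m ∈ ℕ and every β ∈ ℝ, (1/(√π·2^m·m!))·∫_ℝ exp(−y²)·H_m(y)²·exp(iβy) dy = exp(−β²/4)·Σ_{k=0}^{m} [(−1)^k·m!/((k!)²·(m−k)!)]·(β²/2)^k, i.e., the characteristic function of the probability density y ↦ (√π·2^m·m!)^{−1}·e^{−y²}·H_m(y)² equals exp(−β²/4)·L_m(β²/2), where L_m is the m-th Laguerre polynomial. -/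
open MeasureTheory Finset Polynomial Filter Topology

noncomputable def PH : ℕ → Polynomial ℝ
  | 0 => 1
  | n+1 => Polynomial.C 2 * Polynomial.X * PH n - Polynomial.derivative (PH n)

lemma PH_zero : PH 0 = 1 := rfl
lemma PH_succ (n : ℕ) : PH (n+1) = Polynomial.C 2 * Polynomial.X * PH n - Polynomial.derivative (PH n) := rfl

lemma PH_deriv (n : ℕ) : Polynomial.derivative (PH (n+1)) = Polynomial.C (2*(n+1) : ℝ) * PH n := by
  induction n with
  | zero => simp [PH_succ, PH_zero]
  | succ n ih =>
    rw [PH_succ (n+1), map_sub]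
    simp only [derivative_mul, derivative_C, derivative_X, ih, zero_mul, one_mul, mul_one, zero_add]
    rw [PH_succ n]
    simp only [map_mul, map_add, map_one, C_add, C_mul, C_1]
    push_cast
    simp only [C_add, C_mul, C_1]
    ring

lemma hasDerivAt_gauss_poly (p : Polynomial ℝ) (y : ℝ) :
    HasDerivAt (fun y : ℝ => Real.exp (-(y^2)) * p.eval y)
      (Real.exp (-(y^2)) * ((Polynomial.derivative p).eval y - 2*y*p.eval y)) y := by
  have h1 : HasDerivAt (fun y : ℝ => Real.exp (-(y^2))) (Real.exp (-(y^2)) * (-(2*y))) y := by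
    have h : HasDerivAt (fun y : ℝ => -(y^2)) (-(2*y)) y := by
      simpa using ((hasDerivAt_pow 2 y).fun_neg)
    simpa [mul_comm] using h.exp
  have := h1.fun_mul (p.hasDerivAt y)
  refine this.congr_deriv ?_
  ring

noncomputable def physHermite (m : ℕ) (y : ℝ) : ℝ :=
  (-1 : ℝ) ^ m * Real.exp (y ^ 2) * iteratedDeriv m (fun s : ℝ => Real.exp (-(s ^ 2))) y

lemma gauss_iter (n : ℕ) :
    (fun y : ℝ => (-1 : ℝ)^n * iteratedDeriv n (fun s : ℝ => Real.exp (-(s ^ 2))) y)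
      = fun y : ℝ => Real.exp (-(y^2)) * (PH n).eval y := by
  induction n with
  | zero => funext y; simp [iteratedDeriv_zero, PH_zero]
  | succ n ih =>
    funext y
    have h2 : ((-1:ℝ)^n * (-1:ℝ)^n) = 1 := by
      rw [← pow_add]; exact Even.neg_one_pow ⟨n, rfl⟩
    have hit : iteratedDeriv n (fun s : ℝ => Real.exp (-(s ^ 2)))
        = fun z : ℝ => (-1:ℝ)^n * (Real.exp (-(z^2)) * (PH n).eval z) := by
      funext z
      have h := congrFun ih z
      calc iteratedDeriv n (fun s : ℝ => Real.exp (-(s ^ 2))) z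
          = ((-1:ℝ)^n * (-1:ℝ)^n) * iteratedDeriv n (fun s : ℝ => Real.exp (-(s ^ 2))) z := by
            rw [h2, one_mul]
        _ = (-1:ℝ)^n * (Real.exp (-(z^2)) * (PH n).eval z) := by rw [mul_assoc, h]
    rw [iteratedDeriv_succ, hit]
    have hd : HasDerivAt (fun z : ℝ => (-1:ℝ)^n * (Real.exp (-(z^2)) * (PH n).eval z))
        ((-1:ℝ)^n * (Real.exp (-(y^2)) * ((Polynomial.derivative (PH n)).eval y - 2*y*(PH n).eval y))) y :=
      (hasDerivAt_gauss_poly (PH n) y).const_mul _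
    rw [hd.deriv, PH_succ]
    simp only [Polynomial.eval_sub, Polynomial.eval_mul, Polynomial.eval_C, Polynomial.eval_X]
    rw [pow_succ]
    linear_combination (-(Real.exp (-(y^2)) * ((Polynomial.derivative (PH n)).eval y - 2*y*(PH n).eval y))) * h2

lemma physHermite_eq (m : ℕ) (y : ℝ) : physHermite m y = (PH m).eval y := by
  have h := congrFun (gauss_iter m) y
  unfold physHermite
  rw [show (-1:ℝ)^m * Real.exp (y^2) * iteratedDeriv m (fun s : ℝ => Real.exp (-(s ^ 2))) y
      = Real.exp (y^2) * ((-1:ℝ)^m * iteratedDeriv m (fun s : ℝ => Real.exp (-(s ^ 2))) y) from by ring,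
     h, ← mul_assoc, ← Real.exp_add]
  simp

lemma integrable_pow_gauss (n : ℕ) : Integrable (fun y : ℝ => y^n * Real.exp (-(y^2))) := by
  have h := integrable_rpow_mul_exp_neg_mul_sq (b := 1) one_pos
    (s := (n : ℝ)) (lt_of_lt_of_le neg_one_lt_zero (Nat.cast_nonneg n))
  simpa [Real.rpow_natCast, neg_mul, one_mul] using h

lemma integrable_poly_gauss (p : Polynomial ℝ) :
    Integrable (fun y : ℝ => p.eval y * Real.exp (-(y^2))) := by
  induction p using Polynomial.induction_on' with
  | add p q hp hq =>
    simpa [add_mul] using hp.fun_add hq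
  | monomial n a =>
    simpa [Polynomial.eval_monomial, mul_assoc] using (integrable_pow_gauss n).const_mul a

lemma tendsto_pow_gauss {l : Filter ℝ} (hl : Tendsto (fun y : ℝ => y^2) l atTop)
    (h1 : ∀ᶠ y : ℝ in l, 1 ≤ |y|) (n : ℕ) :
    Tendsto (fun y : ℝ => y^n * Real.exp (-(y^2))) l (𝓝 0) := by
  have key : Tendsto (fun y : ℝ => (y^2)^n * Real.exp (-(y^2))) l (𝓝 0) := by
    have := (Real.tendsto_pow_mul_exp_neg_atTop_nhds_zero n).comp hl
    simpa [Function.comp_def, Real.exp_neg] using this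
  refine squeeze_zero_norm' ?_ key
  filter_upwards [h1] with y hy
  rw [Real.norm_eq_abs, abs_mul, abs_of_nonneg (Real.exp_pos _).le, abs_pow]
  have : |y|^n ≤ (y^2)^n := by
    have h2 : |y| ≤ y^2 := by nlinarith [abs_nonneg y, sq_abs y]
    exact pow_le_pow_left₀ (abs_nonneg y) h2 n
  exact mul_le_mul_of_nonneg_right this (Real.exp_pos _).le

lemma tendsto_poly_gauss {l : Filter ℝ} (hl : Tendsto (fun y : ℝ => y^2) l atTop)
    (h1 : ∀ᶠ y : ℝ in l, 1 ≤ |y|) (p : Polynomial ℝ) :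
    Tendsto (fun y : ℝ => Real.exp (-(y^2)) * p.eval y) l (𝓝 0) := by
  have : Tendsto (fun y : ℝ => p.eval y * Real.exp (-(y^2))) l (𝓝 0) := by
    induction p using Polynomial.induction_on' with
    | add p q hp hq => simpa [add_mul] using hp.add hq
    | monomial n a =>
      simpa [Polynomial.eval_monomial, mul_assoc] using
        ((tendsto_pow_gauss hl h1 n).const_mul a)
  simpa [mul_comm] using this

lemma sq_tendsto_atTop : Tendsto (fun y : ℝ => y^2) atTop atTop :=
  tendsto_pow_atTop two_ne_zero

lemma sq_tendsto_atBot : Tendsto (fun y : ℝ => y^2) atBot atTop := by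
  have : Tendsto (fun y : ℝ => (-y)^2) atBot atTop :=
    (tendsto_pow_atTop two_ne_zero).comp tendsto_neg_atBot_atTop
  simpa [neg_pow] using this

lemma integral_deriv_eq_zero' (w w' : ℝ → ℂ) (hw : ∀ x, HasDerivAt w (w' x) x)
    (hi : Integrable w') (ht : Tendsto w atTop (𝓝 0)) (hb : Tendsto w atBot (𝓝 0)) :
    ∫ x : ℝ, w' x = 0 := by
  have h1 : Tendsto (fun r : ℝ => ∫ x in (-r)..r, w' x) atTop (𝓝 (∫ x : ℝ, w' x)) :=
    intervalIntegral_tendsto_integral hi tendsto_neg_atTop_atBot tendsto_id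
  have h2 : ∀ r : ℝ, (∫ x in (-r)..r, w' x) = w r - w (-r) := fun r =>
    intervalIntegral.integral_eq_sub_of_hasDerivAt (fun x _ => hw x) hi.intervalIntegrable
  have h3 : Tendsto (fun r : ℝ => w r - w (-r)) atTop (𝓝 0) := by
    simpa using ht.sub (hb.comp tendsto_neg_atTop_atBot)
  exact tendsto_nhds_unique (h1.congr' (by filter_upwards with r using (h2 r))) h3

lemma integral_ibp (u v u' v' : ℝ → ℂ) (hu : ∀ x, HasDerivAt u (u' x) x)
    (hv : ∀ x, HasDerivAt v (v' x) x)
    (h1 : Integrable (fun x => u' x * v x)) (h2 : Integrable (fun x => u x * v' x))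
    (ht : Tendsto (fun x => u x * v x) atTop (𝓝 0))
    (hb : Tendsto (fun x => u x * v x) atBot (𝓝 0)) :
    ∫ x : ℝ, u' x * v x = - ∫ x : ℝ, u x * v' x := by
  have key : ∫ x : ℝ, (u' x * v x + u x * v' x) = 0 :=
    integral_deriv_eq_zero' (fun x => u x * v x) _ (fun x => (hu x).mul (hv x)) (h1.add h2) ht hb
  rw [integral_add h1 h2] at key
  exact eq_neg_of_add_eq_zero_left key

lemma ev_abs_atTop : ∀ᶠ y : ℝ in atTop, 1 ≤ |y| :=
  (eventually_ge_atTop 1).mono fun y hy => by rw [abs_of_nonneg (by linarith)]; exact hy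

lemma ev_abs_atBot : ∀ᶠ y : ℝ in atBot, 1 ≤ |y| :=
  (eventually_le_atBot (-1)).mono fun y hy => by rw [abs_of_nonpos (by linarith)]; linarith

noncomputable def SInt (β : ℝ) (n : ℕ) (q : Polynomial ℝ) : ℂ :=
  ∫ y : ℝ, (Real.exp (-(y^2)) : ℂ) * (((PH n).eval y : ℝ) : ℂ) * ((q.eval y : ℝ) : ℂ)
      * Complex.exp (Complex.I * β * y)

lemma cont_G (p q : Polynomial ℝ) (β : ℝ) :
    Continuous (fun y : ℝ => (Real.exp (-(y^2)) : ℂ) * ((p.eval y : ℝ) : ℂ) * ((q.eval y : ℝ) : ℂ)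
      * Complex.exp (Complex.I * β * y)) := by
  apply Continuous.mul
  · apply Continuous.mul
    · apply Continuous.mul
      · exact Complex.continuous_ofReal.comp (Real.continuous_exp.comp (by continuity))
      · exact Complex.continuous_ofReal.comp p.continuous
    · exact Complex.continuous_ofReal.comp q.continuous
  · exact Complex.continuous_exp.comp (by continuity)

lemma norm_G (p q : Polynomial ℝ) (β : ℝ) (y : ℝ) :
    ‖(Real.exp (-(y^2)) : ℂ) * ((p.eval y : ℝ) : ℂ) * ((q.eval y : ℝ) : ℂ)
      * Complex.exp (Complex.I * β * y)‖ = |(p * q).eval y * Real.exp (-(y^2))| := by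
  have hre : (Complex.I * β * y).re = 0 := by simp
  rw [norm_mul, norm_mul, norm_mul]
  simp only [Complex.norm_real, Real.norm_eq_abs, Complex.norm_exp, hre, Real.exp_zero]
  rw [Polynomial.eval_mul, abs_mul, abs_mul, abs_of_nonneg (Real.exp_pos _).le]
  ring

lemma integrable_G (p q : Polynomial ℝ) (β : ℝ) :
    Integrable (fun y : ℝ => (Real.exp (-(y^2)) : ℂ) * ((p.eval y : ℝ) : ℂ) * ((q.eval y : ℝ) : ℂ)
      * Complex.exp (Complex.I * β * y)) := by
  refine Integrable.mono' (integrable_poly_gauss (p * q)).abs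
    (cont_G p q β).aestronglyMeasurable ?_
  filter_upwards with y
  rw [norm_G]

lemma tendsto_G_mul (p q : Polynomial ℝ) (β : ℝ) {l : Filter ℝ}
    (hl : Tendsto (fun y : ℝ => y^2) l atTop) (h1 : ∀ᶠ y : ℝ in l, 1 ≤ |y|) :
    Tendsto (fun y : ℝ => ((Real.exp (-(y^2)) * p.eval y : ℝ) : ℂ) *
        (((q.eval y : ℝ) : ℂ) * Complex.exp (Complex.I * (β : ℂ) * (y : ℂ)))) l (𝓝 0) := by
  have hb : Tendsto (fun y : ℝ => |(p * q).eval y * Real.exp (-(y^2))|) l (𝓝 0) := by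
    have := (tendsto_poly_gauss hl h1 (p * q)).abs
    simpa [abs_mul, mul_comm] using this
  apply squeeze_zero_norm' ?_ hb
  · filter_upwards with y
    have h := norm_G p q β y
    rw [show ((Real.exp (-(y^2)) * p.eval y : ℝ) : ℂ) *
        (((q.eval y : ℝ) : ℂ) * Complex.exp (Complex.I * (β : ℂ) * (y : ℂ)))
      = (Real.exp (-(y^2)) : ℂ) * ((p.eval y : ℝ) : ℂ) * ((q.eval y : ℝ) : ℂ)
        * Complex.exp (Complex.I * (β : ℂ) * (y : ℂ)) from by push_cast; ring, h]

lemma SInt_succ (β : ℝ) (n : ℕ) (q : Polynomial ℝ) :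
    SInt β (n+1) q = SInt β n (Polynomial.derivative q)
      + Complex.I * (β : ℂ) * SInt β n q := by
  set u : ℝ → ℂ := fun y => ((Real.exp (-(y^2)) * (PH n).eval y : ℝ) : ℂ) with hu_def
  set v : ℝ → ℂ := fun y => ((q.eval y : ℝ) : ℂ) * Complex.exp (Complex.I * (β:ℂ) * (y:ℂ)) with hv_def
  set u' : ℝ → ℂ := fun y => ((-(Real.exp (-(y^2)) * (PH (n+1)).eval y) : ℝ) : ℂ) with hu'_def
  set v' : ℝ → ℂ := fun y => (((Polynomial.derivative q).eval y : ℝ) : ℂ)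
      * Complex.exp (Complex.I * (β:ℂ) * (y:ℂ))
      + Complex.I * (β:ℂ) * (((q.eval y : ℝ) : ℂ) * Complex.exp (Complex.I * (β:ℂ) * (y:ℂ))) with hv'_def
  have hu : ∀ x : ℝ, HasDerivAt u (u' x) x := by
    intro x
    have h := hasDerivAt_gauss_poly (PH n) x
    have h2 : Real.exp (-(x^2)) * ((Polynomial.derivative (PH n)).eval x - 2*x*(PH n).eval x)
        = -(Real.exp (-(x^2)) * (PH (n+1)).eval x) := by
      rw [PH_succ]
      simp only [Polynomial.eval_sub, Polynomial.eval_mul, Polynomial.eval_C, Polynomial.eval_X]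
      ring
    rw [h2] at h
    exact h.ofReal_comp
  have hv : ∀ x : ℝ, HasDerivAt v (v' x) x := by
    intro x
    have h1 : HasDerivAt (fun y : ℝ => ((q.eval y : ℝ) : ℂ))
        (((Polynomial.derivative q).eval x : ℝ) : ℂ) x := (q.hasDerivAt x).ofReal_comp
    have h2 : HasDerivAt (fun y : ℝ => Complex.exp (Complex.I * (β:ℂ) * (y:ℂ)))
        (Complex.exp (Complex.I * (β:ℂ) * (x:ℂ)) * (Complex.I * (β:ℂ))) x := by
      have hid : HasDerivAt (fun y : ℝ => ((y:ℝ):ℂ)) 1 x := (hasDerivAt_id x).ofReal_comp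
      have hlin : HasDerivAt (fun y : ℝ => Complex.I * (β:ℂ) * ((y:ℝ):ℂ)) (Complex.I * (β:ℂ)) x := by
        simpa using hid.const_mul (Complex.I * (β:ℂ))
      exact hlin.cexp
    have := h1.fun_mul h2
    refine this.congr_deriv ?_
    rw [hv'_def]
    ring
  have h1 : Integrable (fun x : ℝ => u' x * v x) := by
    have := (integrable_G (PH (n+1)) q β).neg
    apply this.congr
    filter_upwards with y
    simp only [Pi.neg_apply, hu'_def, hv_def]
    push_cast
    ring
  have h2 : Integrable (fun x : ℝ => u x * v' x) := by
    have ha := integrable_G (PH n) (Polynomial.derivative q) β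
    have hb := (integrable_G (PH n) q β).const_mul (Complex.I * (β:ℂ))
    apply (ha.add hb).congr
    filter_upwards with y
    simp only [Pi.add_apply, hu_def, hv'_def]
    push_cast
    ring
  have ht : Tendsto (fun x : ℝ => u x * v x) atTop (𝓝 0) :=
    tendsto_G_mul (PH n) q β sq_tendsto_atTop ev_abs_atTop
  have hb : Tendsto (fun x : ℝ => u x * v x) atBot (𝓝 0) :=
    tendsto_G_mul (PH n) q β sq_tendsto_atBot ev_abs_atBot
  have key := integral_ibp u v u' v' hu hv h1 h2 ht hb
  have e1 : SInt β (n+1) q = - ∫ x : ℝ, u' x * v x := by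
    rw [SInt, ← integral_neg]
    congr 1
    funext y
    simp only [hu'_def, hv_def]
    push_cast
    ring
  have e2 : (∫ x : ℝ, u x * v' x)
      = SInt β n (Polynomial.derivative q) + Complex.I * (β:ℂ) * SInt β n q := by
    have ha := integrable_G (PH n) (Polynomial.derivative q) β
    have hb' := (integrable_G (PH n) q β).const_mul (Complex.I * (β:ℂ))
    calc (∫ x : ℝ, u x * v' x)
        = ∫ y : ℝ, ((Real.exp (-(y^2)) : ℂ) * (((PH n).eval y : ℝ) : ℂ)
            * (((Polynomial.derivative q).eval y : ℝ) : ℂ) * Complex.exp (Complex.I * (β:ℂ) * (y:ℂ))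
          + Complex.I * (β:ℂ) * ((Real.exp (-(y^2)) : ℂ) * (((PH n).eval y : ℝ) : ℂ)
            * ((q.eval y : ℝ) : ℂ) * Complex.exp (Complex.I * (β:ℂ) * (y:ℂ)))) := by
          congr 1
          funext y
          simp only [hu_def, hv'_def]
          push_cast
          ring
      _ = SInt β n (Polynomial.derivative q) + Complex.I * (β:ℂ) * SInt β n q := by
          rw [integral_add ha hb', MeasureTheory.integral_const_mul]
          rfl
  rw [e1, key, neg_neg, e2]

lemma SInt_zero_poly (β : ℝ) (n : ℕ) : SInt β n 0 = 0 := by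
  simp [SInt]

lemma SInt_C_mul (β : ℝ) (n : ℕ) (a : ℝ) (p : Polynomial ℝ) :
    SInt β n (Polynomial.C a * p) = (a : ℂ) * SInt β n p := by
  unfold SInt
  rw [← MeasureTheory.integral_const_mul]
  congr 1
  funext y
  simp only [Polynomial.eval_mul, Polynomial.eval_C]
  push_cast
  ring

lemma SInt_symm (β : ℝ) (n k : ℕ) : SInt β n (PH k) = SInt β k (PH n) := by
  unfold SInt
  congr 1
  funext y
  ring

lemma SInt_base (β : ℝ) :
    SInt β 0 1 = (Real.sqrt Real.pi : ℂ) * Complex.exp (-(β:ℂ)^2/4) := by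
  have h := fourierIntegral_gaussian (b := 1) (by norm_num) (β:ℂ)
  have e1 : SInt β 0 1 = ∫ x : ℝ, Complex.exp (Complex.I * (β:ℂ) * (x:ℂ))
      * Complex.exp (-1 * (x:ℂ)^2) := by
    unfold SInt
    congr 1
    funext y
    rw [PH_zero]
    simp only [Polynomial.eval_one, Complex.ofReal_one, mul_one, one_mul, neg_one_mul]
    push_cast
    ring
  rw [e1, h]
  have e2 : ((Real.pi : ℂ) / 1) ^ (1/2 : ℂ) = (Real.sqrt Real.pi : ℂ) := by
    rw [div_one, Real.sqrt_eq_rpow, Complex.ofReal_cpow Real.pi_pos.le]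
    norm_num
  rw [e2]
  norm_num

lemma SInt_one (β : ℝ) (n : ℕ) :
    SInt β n 1 = (Complex.I * (β:ℂ))^n * ((Real.sqrt Real.pi : ℂ) * Complex.exp (-(β:ℂ)^2/4)) := by
  induction n with
  | zero => simpa using SInt_base β
  | succ n ih =>
    rw [SInt_succ, Polynomial.derivative_one, SInt_zero_poly, zero_add, ih, pow_succ]
    ring

noncomputable def FS (β : ℝ) (n k : ℕ) : ℂ :=
  ∑ j ∈ Finset.range (n+1), (n.choose j : ℂ) * (k.descFactorial j : ℂ) * 2^j
    * (Complex.I * (β:ℂ))^(n-j) * (Complex.I * (β:ℂ))^(k-j)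

lemma FS_zero_right (β : ℝ) (n : ℕ) : FS β n 0 = (Complex.I * (β:ℂ))^n := by
  rw [FS, Finset.sum_eq_single 0]
  · simp
  · intro j hj hne
    obtain ⟨i, rfl⟩ := Nat.exists_eq_succ_of_ne_zero hne
    simp [Nat.zero_descFactorial_succ]
  · intro h
    simp at h

lemma FS_zero_left (β : ℝ) (k : ℕ) : FS β 0 k = (Complex.I * (β:ℂ))^k := by
  simp [FS]

lemma FS_succ_zero (β : ℝ) (n : ℕ) :
    FS β (n+1) 0 = Complex.I * (β:ℂ) * FS β n 0 := by
  rw [FS_zero_right, FS_zero_right, pow_succ]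
  ring

lemma FS_succ_succ (β : ℝ) (n k : ℕ) :
    FS β (n+1) (k+1) = 2*((k:ℂ)+1) * FS β n k + Complex.I * (β:ℂ) * FS β n (k+1) := by
  rw [FS, Finset.sum_range_succ']
  have hterm : ∀ j ∈ Finset.range (n+1),
      ((n+1).choose (j+1) : ℂ) * ((k+1).descFactorial (j+1) : ℂ) * 2^(j+1)
        * (Complex.I * (β:ℂ))^(n+1-(j+1)) * (Complex.I * (β:ℂ))^(k+1-(j+1))
      = (2*((k:ℂ)+1)) * ((n.choose j : ℂ) * (k.descFactorial j : ℂ) * 2^j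
          * (Complex.I * (β:ℂ))^(n-j) * (Complex.I * (β:ℂ))^(k-j))
        + ((n.choose (j+1) : ℂ) * ((k+1) : ℂ) * (k.descFactorial j : ℂ) * 2^(j+1)
          * (Complex.I * (β:ℂ))^(n-j) * (Complex.I * (β:ℂ))^(k-j)) := by
    intro j hj
    rw [Nat.choose_succ_succ, Nat.succ_descFactorial_succ, Nat.succ_sub_succ, Nat.succ_sub_succ]
    push_cast
    ring
  rw [Finset.sum_congr rfl hterm, Finset.sum_add_distrib, ← Finset.mul_sum]
  have h2 : (∑ j ∈ Finset.range (n+1), ((n.choose (j+1) : ℂ) * ((k+1) : ℂ)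
        * (k.descFactorial j : ℂ) * 2^(j+1) * (Complex.I * (β:ℂ))^(n-j) * (Complex.I * (β:ℂ))^(k-j)))
      + (((n+1).choose 0 : ℂ) * ((k+1).descFactorial 0 : ℂ) * 2^0
          * (Complex.I * (β:ℂ))^(n+1-0) * (Complex.I * (β:ℂ))^(k+1-0))
      = Complex.I * (β:ℂ) * FS β n (k+1) := by
    rw [FS, Finset.mul_sum]
    conv_rhs => rw [Finset.sum_range_succ']
    rw [Finset.sum_range_succ]
    have hzero : ((n.choose (n+1) : ℂ) * ((k+1) : ℂ) * (k.descFactorial n : ℂ) * 2^(n+1)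
        * (Complex.I * (β:ℂ))^(n-n) * (Complex.I * (β:ℂ))^(k-n)) = 0 := by
      simp [Nat.choose_succ_self]
    rw [hzero, add_zero]
    congr 1
    · apply Finset.sum_congr rfl
      intro j hj
      rw [Finset.mem_range] at hj
      rw [Nat.succ_descFactorial_succ, Nat.succ_sub_succ]
      have he : n - j = (n - (j+1)) + 1 := by omega
      rw [he, pow_succ]
      push_cast
      ring
    · simp only [Nat.choose_zero_right, Nat.descFactorial_zero, Nat.sub_zero, pow_zero]
      rw [pow_succ (Complex.I * (β:ℂ)) n]
      push_cast
      ring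
  rw [add_assoc, h2]
  simp only [FS]

lemma SInt_PH (β : ℝ) (m k : ℕ) :
    SInt β m (PH k)
      = (Real.sqrt Real.pi : ℂ) * Complex.exp (-(β:ℂ)^2/4) * FS β m k := by
  induction m generalizing k with
  | zero =>
    rw [SInt_symm, PH_zero, SInt_one, FS_zero_left]
    ring
  | succ m ih =>
    rw [SInt_succ]
    cases k with
    | zero =>
      rw [PH_zero, Polynomial.derivative_one, SInt_zero_poly, zero_add, ← PH_zero, ih, FS_succ_zero]
      ring
    | succ j =>
      rw [PH_deriv, SInt_C_mul, ih, ih, FS_succ_succ]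
      push_cast
      ring

lemma FS_diag (β : ℝ) (m : ℕ) :
    FS β m m = ∑ k ∈ Finset.range (m+1), (m.choose (m-k) : ℂ) * (m.descFactorial (m-k) : ℂ)
      * 2^(m-k) * ((Complex.I * (β:ℂ))^k * (Complex.I * (β:ℂ))^k) := by
  rw [FS, ← Finset.sum_range_reflect]
  apply Finset.sum_congr rfl
  intro j hj
  rw [Finset.mem_range] at hj
  rw [show m+1-1-j = m - j from by omega, show m - (m-j) = j from by omega]
  ring

/-- Characteristic function of the Fock-state tomogram: for every `m ∈ ℕ`
and `β ∈ ℝ`,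
`(1/(√π·2^m·m!))·∫ e^{−y²}·H_m(y)²·e^{iβy} dy
  = e^{−β²/4}·Σ_{k=0}^{m} [(−1)^k·m!/((k!)²·(m−k)!)]·(β²/2)^k`,
i.e. the characteristic function of the Fock-state tomogram equals
`exp(−β²/4)·L_m(β²/2)` with `L_m` the `m`-th Laguerre polynomial. -/
theorem fock_tomogram_charFun (m : ℕ) (β : ℝ) :
    ∫ y : ℝ,
        (((1 / (Real.sqrt Real.pi * 2 ^ m * (m.factorial : ℝ))) *
            Real.exp (-(y ^ 2)) * (physHermite m y) ^ 2 : ℝ) : ℂ) *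
          Complex.exp (Complex.I * (β : ℂ) * (y : ℂ))
      = ((Real.exp (-(β ^ 2) / 4) *
            ∑ k ∈ Finset.range (m + 1),
              ((-1 : ℝ) ^ k * (m.factorial : ℝ) /
                  (((k.factorial : ℝ)) ^ 2 * ((m - k).factorial : ℝ))) *
                (β ^ 2 / 2) ^ k : ℝ) : ℂ) := by
  have e1 : (∫ y : ℝ,
        (((1 / (Real.sqrt Real.pi * 2 ^ m * (m.factorial : ℝ))) *
            Real.exp (-(y ^ 2)) * (physHermite m y) ^ 2 : ℝ) : ℂ) *
          Complex.exp (Complex.I * (β : ℂ) * (y : ℂ)))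
      = ((1 / (Real.sqrt Real.pi * 2 ^ m * (m.factorial : ℝ)) : ℝ) : ℂ) * SInt β m (PH m) := by
    rw [SInt, ← MeasureTheory.integral_const_mul]
    congr 1
    funext y
    rw [physHermite_eq]
    push_cast
    ring
  rw [e1, SInt_PH, FS_diag]
  push_cast
  simp only [Finset.mul_sum]
  apply Finset.sum_congr rfl
  intro k hk
  rw [Finset.mem_range] at hk
  have hk' : k ≤ m := by omega
  have h2 : (m.descFactorial (m-k) : ℂ) * (k.factorial : ℂ) = (m.factorial : ℂ) := by
    have h := Nat.factorial_mul_descFactorial (Nat.sub_le m k)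
    rw [show m - (m-k) = k from by omega, mul_comm] at h
    exact_mod_cast h
  have h3 : (m.choose k : ℂ) * (k.factorial : ℂ) * ((m-k).factorial : ℂ) = (m.factorial : ℂ) := by
    exact_mod_cast Nat.choose_mul_factorial_mul_factorial hk'
  have key : (m.choose k : ℂ) * (m.descFactorial (m-k) : ℂ)
      * ((k.factorial : ℂ) * (k.factorial : ℂ) * ((m-k).factorial : ℂ))
      = (m.factorial : ℂ) * (m.factorial : ℂ) := by
    linear_combination ((m.descFactorial (m-k) : ℂ) * (k.factorial : ℂ)) * h3
      + (m.factorial : ℂ) * h2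
  rw [Nat.choose_symm hk']
  have hIk : (Complex.I * (β:ℂ))^k * (Complex.I * (β:ℂ))^k
      = (-1)^k * ((β:ℂ)^2)^k := by
    rw [← mul_pow, ← neg_pow]
    congr 1
    rw [show Complex.I * (β:ℂ) * (Complex.I * (β:ℂ)) = Complex.I^2 * (β:ℂ)^2 from by ring,
      Complex.I_sq]
    ring
  have h4 : (2:ℂ)^(m-k) * 2^k = 2^m := by
    rw [← pow_add]
    congr 1
    omega
  rw [hIk, div_pow]
  have hπ : (Real.sqrt Real.pi : ℂ) ≠ 0 := by
    simp only [ne_eq, Complex.ofReal_eq_zero]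
    positivity
  have hfm : (m.factorial : ℂ) ≠ 0 := by exact_mod_cast m.factorial_ne_zero
  have hfk : (k.factorial : ℂ) ≠ 0 := by exact_mod_cast k.factorial_ne_zero
  have hfmk : ((m-k).factorial : ℂ) ≠ 0 := by exact_mod_cast (m-k).factorial_ne_zero
  field_simp
  linear_combination (((β:ℂ)^2)^k * 2^(m-k) * 2^k) * key
    + (((β:ℂ)^2)^k
      * (m.factorial : ℂ) * (m.factorial : ℂ)) * h4
end

section
/- (Tomogram of a coherent state.) Let a ∈ ℂ, μ, ν ∈ ℝ with ν ≠ 0, and set α = √(μ² + ν²). Then for every x ∈ ℝ, (1/(2π|ν|))·|∫_ℝ π^{−1/4}·exp(−y²/2 − |a|²/2 + √2·a·y − a²/2)·exp(iμy²/(2ν) − ixy/ν) dy|² = (√π·α)^{−1}·exp(−(x − √2·(μ·Re a + ν·Im a))²/α²), i.e., the symplectic tomogram of the coherent state |a⟩ is a Gaussian density in x with mean √2·(μ·Re a + ν·Im a) and variance α²/2. -/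
set_option maxHeartbeats 1000000


open MeasureTheory

/-- Tomogram of a coherent state: for `a ∈ ℂ`, `μ, ν ∈ ℝ` with `ν ≠ 0` and
`α = √(μ² + ν²)`, the symplectic tomogram of the coherent state `|a⟩`,
`W(x|μ,ν) = (1/(2π|ν|))·|∫ ψ_a(y)·exp(iμy²/(2ν) − ixy/ν) dy|²`, equals the Gaussian
density `(√π·α)⁻¹·exp(−(x − √2·(μ·Re a + ν·Im a))²/α²)`. -/
theorem coherent_state_tomogram
    (a : ℂ) (μ ν : ℝ) (hν : ν ≠ 0) (α : ℝ) (hα : α = Real.sqrt (μ ^ 2 + ν ^ 2)) (x : ℝ) :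
    (1 / (2 * Real.pi * |ν|)) *
        ‖∫ y : ℝ,
            ((Real.pi ^ (-(1 : ℝ) / 4) : ℝ) : ℂ) *
              Complex.exp (-(y : ℂ) ^ 2 / 2 - ((‖a‖ : ℝ) : ℂ) ^ 2 / 2 +
                ((Real.sqrt 2 : ℝ) : ℂ) * a * (y : ℂ) - a ^ 2 / 2) *
              Complex.exp (Complex.I * (μ : ℂ) * (y : ℂ) ^ 2 / (2 * (ν : ℂ)) -
                Complex.I * (x : ℂ) * (y : ℂ) / (ν : ℂ))‖ ^ 2
      = (Real.sqrt Real.pi * α)⁻¹ *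
          Real.exp (-(x - Real.sqrt 2 * (μ * a.re + ν * a.im)) ^ 2 / α ^ 2) := by
  have hν' : (ν:ℂ) ≠ 0 := by exact_mod_cast hν
  have hμν : (0:ℝ) < μ^2 + ν^2 := by positivity
  have hα2 : α^2 = μ^2 + ν^2 := by rw [hα]; exact Real.sq_sqrt hμν.le
  have hαpos : 0 < α := by rw [hα]; exact Real.sqrt_pos.mpr hμν
  have hs2 : Real.sqrt 2 ^ 2 = 2 := Real.sq_sqrt (by norm_num)
  set s := Real.sqrt 2 with hs
  set p := a.re with hp
  set q := a.im with hq
  set b : ℂ := (((-(1/2) : ℝ)) : ℂ) + ((μ/(2*ν) : ℝ):ℂ) * Complex.I with hbdef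
  set c : ℂ := ((s : ℝ):ℂ) * a - Complex.I * x / ν with hcdef
  set d : ℂ := -((‖a‖ : ℝ):ℂ)^2/2 - a^2/2 with hddef
  have hbre : b.re < 0 := by
    simp only [hbdef, Complex.add_re, Complex.ofReal_re, Complex.mul_re, Complex.I_re,
      Complex.I_im, Complex.ofReal_im, mul_zero, mul_one, zero_sub]
    norm_num
  -- Step 1: rewrite the integrand
  have key : ∀ y : ℝ,
      ((Real.pi ^ (-(1 : ℝ) / 4) : ℝ) : ℂ) *
              Complex.exp (-(y : ℂ) ^ 2 / 2 - ((‖a‖ : ℝ) : ℂ) ^ 2 / 2 +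
                ((Real.sqrt 2 : ℝ) : ℂ) * a * (y : ℂ) - a ^ 2 / 2) *
              Complex.exp (Complex.I * (μ : ℂ) * (y : ℂ) ^ 2 / (2 * (ν : ℂ)) -
                Complex.I * (x : ℂ) * (y : ℂ) / (ν : ℂ))
      = ((Real.pi ^ (-(1 : ℝ) / 4) : ℝ) : ℂ) * Complex.exp (b * y^2 + c * y + d) := by
    intro y
    rw [mul_assoc, ← Complex.exp_add]
    congr 2
    rw [hbdef, hcdef, hddef]
    push_cast
    ring
  have hint : (∫ y : ℝ,
      ((Real.pi ^ (-(1 : ℝ) / 4) : ℝ) : ℂ) *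
              Complex.exp (-(y : ℂ) ^ 2 / 2 - ((‖a‖ : ℝ) : ℂ) ^ 2 / 2 +
                ((Real.sqrt 2 : ℝ) : ℂ) * a * (y : ℂ) - a ^ 2 / 2) *
              Complex.exp (Complex.I * (μ : ℂ) * (y : ℂ) ^ 2 / (2 * (ν : ℂ)) -
                Complex.I * (x : ℂ) * (y : ℂ) / (ν : ℂ)))
      = ((Real.pi ^ (-(1 : ℝ) / 4) : ℝ) : ℂ) *
          ((↑Real.pi / -b) ^ (1/2 : ℂ) * Complex.exp (d - c^2 / (4*b))) := by
    simp_rw [key]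
    rw [MeasureTheory.integral_const_mul, integral_cexp_quadratic hbre]
  rw [hint]
  -- Step 2: the real part of the exponent
  have hw : 2 * (d - c^2/(4*b)).re
      = -(x - s * (μ * p + ν * q)) ^ 2 / α ^ 2 := by
    have hd2 : (μ^2 + ν^2) ≠ 0 := by positivity
    have h1 : 2 * (d - c^2/(4*b)).re * (μ^2+ν^2)
        = -2*p^2*(μ^2+ν^2) + (s^2*ν^2*p^2 - (s*ν*q - x)^2 - 2*μ*s*p*(s*ν*q - x)) := by
      have habs : ‖a‖^2 = p^2 + q^2 := by
        rw [Complex.sq_norm, Complex.normSq_apply, hp, hq]; ring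
      simp only [hbdef, hcdef, hddef, Complex.div_re, Complex.sub_re, Complex.sub_im,
        Complex.add_re, Complex.add_im, Complex.mul_re, Complex.mul_im, Complex.normSq_apply,
        Complex.ofReal_re, Complex.ofReal_im, Complex.I_re, Complex.I_im, Complex.neg_re,
        Complex.neg_im, Complex.div_im, pow_two, Complex.re_ofNat, Complex.im_ofNat,
        ← hp, ← hq]
      rw [show ‖a‖ * ‖a‖ = p^2 + q^2 by rw [← habs]; ring]
      have hd1 : (4 * 4 * (2 * ν * (2 * ν)) + 4 * μ * (4 * μ) * (2 * 2)) ≠ 0 := by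
        have h : (4 * 4 * (2 * ν * (2 * ν)) + 4 * μ * (4 * μ) * (2 * 2)) = 64*ν^2 + 64*μ^2 := by
          ring
        rw [h]; positivity
      norm_num
      field_simp
      ring
    rw [hα2, eq_div_iff hd2, h1]
    linear_combination (p^2*(μ^2+ν^2)) * hs2
  -- Step 3: the modulus of b
  have habsb : ‖b‖ = α / (2*|ν|) := by
    rw [Complex.norm_def, Complex.normSq_apply]
    have : b.re * b.re + b.im * b.im = (α / (2*|ν|))^2 := by
      simp only [hbdef, Complex.add_re, Complex.add_im, Complex.ofReal_re, Complex.ofReal_im,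
        Complex.mul_re, Complex.mul_im, Complex.I_re, Complex.I_im, mul_zero, mul_one,
        zero_sub, zero_add, zero_mul, add_zero]
      rw [div_pow, hα2, mul_pow, sq_abs]
      field_simp
      ring
    rw [this, Real.sqrt_sq (by positivity)]
  have hb0 : b ≠ 0 := by
    intro h; rw [h] at hbre; simp at hbre
  have hπb : ‖(↑Real.pi / -b)‖ = 2 * Real.pi * |ν| / α := by
    rw [norm_div, norm_neg, habsb, Complex.norm_real, Real.norm_eq_abs,
      abs_of_pos Real.pi_pos]
    field_simp
  -- Step 4: compute the norm
  rw [show ((1:ℂ)/2) = ((1/2 : ℝ):ℂ) by norm_num]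
  rw [norm_mul, norm_mul,
    Complex.norm_real, Real.norm_eq_abs, Complex.norm_cpow_real, Complex.norm_exp, hπb]
  rw [abs_of_pos (by positivity : (0:ℝ) < Real.pi ^ (-(1:ℝ)/4))]
  have hrw : ((2 * Real.pi * |ν| / α) ^ (1/2 : ℝ)) ^ 2 = 2 * Real.pi * |ν| / α := by
    rw [← Real.rpow_natCast (_ ^ (1/2:ℝ)) 2, ← Real.rpow_mul (by positivity)]
    norm_num
  have hexp : (Real.exp ((d - c^2/(4*b)).re)) ^ 2
      = Real.exp (-(x - s * (μ * p + ν * q)) ^ 2 / α ^ 2) := by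
    rw [← hw, ← Real.exp_nat_mul]
    norm_num
  have hν0 : (0:ℝ) < |ν| := abs_pos.mpr hν
  rw [mul_pow, mul_pow, hrw, hexp]
  have hpow : (Real.pi ^ (-(1:ℝ)/4)) ^ 2 = (Real.sqrt Real.pi)⁻¹ := by
    rw [← Real.rpow_natCast (_ ^ (-(1:ℝ)/4)) 2, ← Real.rpow_mul Real.pi_pos.le,
      Real.sqrt_eq_rpow, ← Real.rpow_neg Real.pi_pos.le]
    norm_num
  rw [hpow, mul_inv]
  field_simp
end
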